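/- arXiv:2401.05693 — 3 statements merged into one kernel-verified Lean document; each statement's English description precedes it below -/
import Mathlib

section
/- For a slowly varying function L and any α < -1 with ∫_x^∞ t^α L(t) dt finite for large x, the ratio (∫_x^∞ t^α L(t) dt)/(x^{α+1} L(x)) → -1/(α+1) as x → ∞. -/
open Filter Real MeasureTheory Set

lemma uct_aux (h : ℝ → ℝ) (hm : Measurable h)
    (hptw : ∀ u : ℝ, Tendsto (fun y => h (y + u) - h y) atTop (nhds 0))
    {ε : ℝ} (hε : 0 < ε) :
    ∃ Y : ℝ, ∀ y ≥ Y, ∀ u ∈ Set.Icc (0:ℝ) 1, |h (y + u) - h y| ≤ ε := by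
  by_contra hcon
  push_neg at hcon
  choose y hy u hu hgt using hcon
  have hyt : Tendsto (fun n : ℕ => y n) atTop atTop :=
    tendsto_atTop_mono (fun n => hy (n : ℝ)) tendsto_natCast_atTop_atTop
  have hyt' : Tendsto (fun n : ℕ => y n + u n) atTop atTop :=
    tendsto_atTop_mono (fun n => le_add_of_nonneg_right (hu (n:ℝ)).1) hyt
  set g : ℕ → ℝ → ℝ := fun n t => h (y n + t) - h (y n) with hg
  set k : ℕ → ℝ → ℝ := fun n t => h (y n + u n + t) - h (y n + u n) with hk
  have hgm : ∀ n, StronglyMeasurable (g n) := fun n =>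
    ((hm.comp (measurable_const_add _)).sub measurable_const).stronglyMeasurable
  have hkm : ∀ n, StronglyMeasurable (k n) := fun n =>
    ((hm.comp (measurable_const_add _)).sub measurable_const).stronglyMeasurable
  have hgl : ∀ t : ℝ, Tendsto (fun n => g n t) atTop (nhds 0) := fun t =>
    ((hptw t).comp hyt)
  have hkl : ∀ t : ℝ, Tendsto (fun n => k n t) atTop (nhds 0) := fun t =>
    ((hptw t).comp hyt')
  have hIcc : MeasurableSet (Icc (0:ℝ) 2) := measurableSet_Icc
  have hIccfin : volume (Icc (0:ℝ) 2) ≠ ⊤ := by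
    simp [Real.volume_Icc]
  obtain ⟨t₁, ht₁s, ht₁m, ht₁μ, ht₁u⟩ :=
    MeasureTheory.tendstoUniformlyOn_of_ae_tendsto (μ := volume) hgm
      stronglyMeasurable_const hIcc hIccfin
      (Filter.Eventually.of_forall (fun t _ => hgl t)) (by norm_num : (0:ℝ) < 1/8)
  obtain ⟨t₂, ht₂s, ht₂m, ht₂μ, ht₂u⟩ :=
    MeasureTheory.tendstoUniformlyOn_of_ae_tendsto (μ := volume) hkm
      stronglyMeasurable_const hIcc hIccfin
      (Filter.Eventually.of_forall (fun t _ => hkl t)) (by norm_num : (0:ℝ) < 1/8)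
  set S : Set ℝ := Icc (0:ℝ) 2 \ (t₁ ∪ t₂) with hS
  have hSm : MeasurableSet S := hIcc.diff (ht₁m.union ht₂m)
  have hSsub : S ⊆ Icc (0:ℝ) 2 := diff_subset
  -- measure lower bound : 2 ≤ μ S + 1/4
  have hμS : (2:ENNReal) ≤ volume S + ENNReal.ofReal (1/4) := by
    have h1 : Icc (0:ℝ) 2 ⊆ S ∪ (t₁ ∪ t₂) := by
      intro x hx
      by_cases hx2 : x ∈ t₁ ∪ t₂
      · exact Or.inr hx2
      · exact Or.inl ⟨hx, hx2⟩
    calc (2:ENNReal) = volume (Icc (0:ℝ) 2) := by rw [Real.volume_Icc]; norm_num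
    _ ≤ volume S + volume (t₁ ∪ t₂) := le_trans (measure_mono h1) (measure_union_le _ _)
    _ ≤ volume S + (ENNReal.ofReal (1/8) + ENNReal.ofReal (1/8)) := by
        gcongr
        exact le_trans (measure_union_le _ _) (add_le_add ht₁μ ht₂μ)
    _ = volume S + ENNReal.ofReal (1/4) := by rw [← ENNReal.ofReal_add] <;> norm_num
  -- uniform smallness
  obtain ⟨n, hn₁, hn₂⟩ : ∃ n, (∀ t ∈ Icc (0:ℝ) 2 \ t₁, dist (0:ℝ) (g n t) < ε/2) ∧
      (∀ t ∈ Icc (0:ℝ) 2 \ t₂, dist (0:ℝ) (k n t) < ε/2) :=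
    ((Metric.tendstoUniformlyOn_iff.mp ht₁u (ε/2) (by linarith)).and
      (Metric.tendstoUniformlyOn_iff.mp ht₂u (ε/2) (by linarith))).exists
  -- overlap
  set B : Set ℝ := (fun t => t + (-(u n))) ⁻¹' S with hB
  have hBm : MeasurableSet B := hSm.preimage (measurable_add_const _)
  have hμB : volume B = volume S := measure_preimage_add_right volume _ S
  have hun : u (n:ℝ) ∈ Icc (0:ℝ) 1 := hu _
  have hnonempty : (S ∩ B).Nonempty := by
    by_contra hempty
    rw [Set.not_nonempty_iff_eq_empty] at hempty
    have hdisj : Disjoint S B := Set.disjoint_iff_inter_eq_empty.mpr hempty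
    have hcup : volume (S ∪ B) = volume S + volume S := by
      rw [measure_union hdisj hBm, hμB]
    have hsub3 : S ∪ B ⊆ Icc (0:ℝ) 3 := by
      rintro x (hx | hx)
      · exact Icc_subset_Icc le_rfl (by norm_num) (hSsub hx)
      · have := hSsub hx
        simp only [mem_Icc] at this ⊢
        constructor <;> [linarith [hun.1, this.1]; linarith [hun.2, this.2]]
    have h3 : volume (S ∪ B) ≤ ENNReal.ofReal 3 := by
      refine le_trans (measure_mono hsub3) ?_
      rw [Real.volume_Icc]
      norm_num
    have hfin : volume S ≠ ⊤ :=
      ne_top_of_le_ne_top hIccfin (measure_mono hSsub)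
    have h4 : (4:ENNReal) ≤ ENNReal.ofReal 3 + ENNReal.ofReal (1/2) := by
      calc (4:ENNReal) = 2 + 2 := by norm_num
      _ ≤ (volume S + ENNReal.ofReal (1/4)) + (volume S + ENNReal.ofReal (1/4)) :=
          add_le_add hμS hμS
      _ = (volume S + volume S) + (ENNReal.ofReal (1/4) + ENNReal.ofReal (1/4)) := by ring
      _ ≤ ENNReal.ofReal 3 + ENNReal.ofReal (1/2) := by
          rw [← hcup, ← ENNReal.ofReal_add (by norm_num) (by norm_num)]
          exact add_le_add h3 (by norm_num)
    rw [← ENNReal.ofReal_add (by norm_num) (by norm_num)] at h4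
    have : (4:ENNReal) ≤ ENNReal.ofReal (7/2) := by convert h4 using 2; norm_num
    rw [show (4:ENNReal) = ENNReal.ofReal 4 by simp] at this
    have := (ENNReal.ofReal_le_ofReal_iff (by norm_num)).mp this
    linarith
  obtain ⟨t, htS, htB⟩ := hnonempty
  have hsS : t - u n ∈ S := by rw [sub_eq_add_neg]; exact htB
  -- contradiction
  have key : h (y n + u n) - h (y n) = g n t - k n (t - u n) := by
    simp only [hg, hk]
    ring_nf
  have h1 : |g n t| < ε/2 := by
    have := hn₁ t ⟨hSsub htS, fun ht1 => (htS.2 (Or.inl ht1))⟩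
    rwa [Real.dist_eq, abs_sub_comm, sub_zero] at this
  have h2 : |k n (t - u n)| < ε/2 := by
    have := hn₂ (t - u n) ⟨hSsub hsS, fun ht2 => (hsS.2 (Or.inr ht2))⟩
    rwa [Real.dist_eq, abs_sub_comm, sub_zero] at this
  have := hgt (n:ℝ)
  rw [key] at this
  have habs : |g n t - k n (t - u n)| ≤ |g n t| + |k n (t - u n)| := abs_sub _ _
  linarith

lemma potter_aux (h : ℝ → ℝ) (hm : Measurable h)
    (hptw : ∀ u : ℝ, Tendsto (fun y => h (y + u) - h y) atTop (nhds 0))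
    {ε : ℝ} (hε : 0 < ε) :
    ∃ Y : ℝ, ∀ y ≥ Y, ∀ t ≥ (0:ℝ), h (y + t) - h y ≤ ε * (t + 1) := by
  obtain ⟨Y, hY⟩ := uct_aux h hm hptw hε
  refine ⟨Y, fun y hy t ht => ?_⟩
  have step : ∀ n : ℕ, ∀ u ∈ Set.Icc (0:ℝ) 1, h (y + n * u) - h y ≤ n * ε := by
    intro n
    induction n with
    | zero => intro u _; simp
    | succ n ih =>
      intro u hu
      have hnu : (0:ℝ) ≤ n * u := mul_nonneg (Nat.cast_nonneg n) hu.1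
      have h1 : h (y + n*u + u) - h (y + n*u) ≤ ε :=
        le_trans (le_abs_self _) (hY (y + n*u) (by linarith) u hu)
      have h2 := ih u hu
      have heq : y + ((n:ℝ)+1) * u = y + n*u + u := by ring
      push_cast
      rw [heq]
      linarith
  set n : ℕ := ⌊t⌋₊ + 1 with hn
  have hnpos : (0:ℝ) < n := by positivity
  have htn : t < n := by
    have := Nat.lt_floor_add_one t
    push_cast [hn]
    push_cast at this
    linarith
  have hu : t / n ∈ Set.Icc (0:ℝ) 1 :=
    ⟨div_nonneg ht hnpos.le, (div_le_one hnpos).mpr htn.le⟩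
  have := step n (t / n) hu
  rw [mul_div_cancel₀ _ hnpos.ne'] at this
  have hfl : (⌊t⌋₊ : ℝ) ≤ t := Nat.floor_le ht
  have : (n:ℝ) * ε ≤ (t + 1) * ε := by
    apply mul_le_mul_of_nonneg_right _ hε.le
    push_cast [hn]
    linarith
  linarith [step n (t/n) hu, mul_div_cancel₀ t hnpos.ne']

lemma potter_real (L : ℝ → ℝ) (hmeas : Measurable L) (hpos : ∀ x > (0:ℝ), 0 < L x)
    (hsv : ∀ c > (0:ℝ), Tendsto (fun x => L (c * x) / L x) atTop (nhds 1))
    {ε : ℝ} (hε : 0 < ε) :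
    ∃ X : ℝ, 0 < X ∧ ∀ x ≥ X, ∀ s ≥ (1:ℝ), L (x * s) ≤ Real.exp ε * s ^ ε * L x := by
  set h : ℝ → ℝ := fun y => Real.log (L (Real.exp y)) with hh
  have hm : Measurable h := Real.measurable_log.comp (hmeas.comp Real.measurable_exp)
  have hptw : ∀ u : ℝ, Tendsto (fun y => h (y + u) - h y) atTop (nhds 0) := by
    intro u
    have hc : (0:ℝ) < Real.exp u := Real.exp_pos u
    have h1 : Tendsto (fun y => L (Real.exp u * Real.exp y) / L (Real.exp y)) atTop (nhds 1) :=
      (hsv _ hc).comp Real.tendsto_exp_atTop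
    have h2 : Tendsto (fun y => Real.log (L (Real.exp u * Real.exp y) / L (Real.exp y)))
        atTop (nhds 0) := by
      have := h1.log one_ne_zero
      simpa using this
    refine h2.congr' ?_
    filter_upwards [eventually_gt_atTop 0] with y _
    have hp1 : 0 < L (Real.exp u * Real.exp y) := hpos _ (by positivity)
    have hp2 : 0 < L (Real.exp y) := hpos _ (Real.exp_pos y)
    rw [Real.log_div hp1.ne' hp2.ne']
    simp [hh, Real.exp_add, mul_comm]
  obtain ⟨Y, hY⟩ := potter_aux h hm hptw hε
  refine ⟨Real.exp Y, Real.exp_pos Y, fun x hx s hs => ?_⟩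
  have hx0 : (0:ℝ) < x := lt_of_lt_of_le (Real.exp_pos Y) hx
  have hs0 : (0:ℝ) < s := lt_of_lt_of_le one_pos hs
  have hy : Real.log x ≥ Y := by
    rw [← Real.log_exp Y]
    exact Real.log_le_log (Real.exp_pos Y) hx
  have ht : Real.log s ≥ 0 := Real.log_nonneg hs
  have key := hY (Real.log x) hy (Real.log s) ht
  have hxs : Real.exp (Real.log x + Real.log s) = x * s := by
    rw [Real.exp_add, Real.exp_log hx0, Real.exp_log hs0]
  have hLxs : 0 < L (x * s) := hpos _ (by positivity)
  have hLx : 0 < L x := hpos _ hx0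
  have key2 : Real.log (L (x * s)) - Real.log (L x) ≤ ε * (Real.log s + 1) := by
    have : h (Real.log x + Real.log s) = Real.log (L (x * s)) := by rw [hh]; simp [hxs]
    have h2 : h (Real.log x) = Real.log (L x) := by rw [hh]; simp [Real.exp_log hx0]
    rw [this, h2] at key
    exact key
  have := Real.exp_le_exp.mpr (by linarith : Real.log (L (x*s)) ≤ Real.log (L x) + ε * (Real.log s + 1))
  rw [Real.exp_log hLxs, Real.exp_add, Real.exp_log hLx] at this
  calc L (x * s) ≤ L x * Real.exp (ε * (Real.log s + 1)) := this
  _ = Real.exp ε * s ^ ε * L x := by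
      rw [Real.rpow_def_of_pos hs0,
        show ε * (Real.log s + 1) = ε + Real.log s * ε by ring, Real.exp_add]
      ring


/-- Karamata: for slowly varying L and α < -1 with integrable tails,
(∫_x^∞ t^α L(t) dt)/(x^{α+1} L(x)) → -1/(α+1) as x → ∞. -/
theorem stmt4 (L : ℝ → ℝ) (hmeas : Measurable L) (hpos : ∀ x > (0:ℝ), 0 < L x)
    (hsv : ∀ c > (0:ℝ), Tendsto (fun x => L (c * x) / L x) atTop (nhds 1))
    (α : ℝ) (hα : α < -1)
    (hint : ∃ x₀ : ℝ, 0 < x₀ ∧ ∀ x ≥ x₀,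
      IntegrableOn (fun t => t ^ α * L t) (Set.Ioi x)) :
    Tendsto (fun x => (∫ t in Set.Ioi x, t ^ α * L t) / (x ^ (α + 1) * L x)) atTop
      (nhds (-1 / (α + 1))) := by
  set ε : ℝ := (-1 - α) / 2 with hεdef
  have hε : 0 < ε := by rw [hεdef]; linarith
  have hαε : α + ε < -1 := by rw [hεdef]; linarith
  obtain ⟨X, hX0, hX⟩ := potter_real L hmeas hpos hsv hε
  set F : ℝ → ℝ → ℝ := fun x s => s ^ α * (L (x * s) / L x) with hF
  have hDCT : Tendsto (fun x => ∫ s in Ioi (1:ℝ), F x s) atTop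
      (nhds (∫ s in Ioi (1:ℝ), s ^ α)) := by
    apply MeasureTheory.tendsto_integral_filter_of_dominated_convergence
      (bound := fun s => Real.exp ε * s ^ (α + ε))
    · filter_upwards with x
      exact (((by measurability : Measurable fun s : ℝ => s ^ α).mul
        ((hmeas.comp (measurable_const_mul x)).div measurable_const)).aestronglyMeasurable)
    · filter_upwards [eventually_ge_atTop X] with x hx
      rw [ae_restrict_iff' measurableSet_Ioi]
      filter_upwards with s hs
      have hs1 : (1:ℝ) ≤ s := le_of_lt hs
      have hs0 : (0:ℝ) < s := lt_of_lt_of_le one_pos hs1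
      have hx0 : (0:ℝ) < x := lt_of_lt_of_le hX0 hx
      have hLx : 0 < L x := hpos x hx0
      have hLxs : 0 < L (x * s) := hpos _ (by positivity)
      have hP := hX x hx s hs1
      have hratio : L (x * s) / L x ≤ Real.exp ε * s ^ ε := by
        rw [div_le_iff₀ hLx]; linarith
      have hFnn : 0 ≤ F x s := by
        apply mul_nonneg (Real.rpow_nonneg hs0.le α)
        positivity
      rw [Real.norm_eq_abs, abs_of_nonneg hFnn]
      calc F x s ≤ s ^ α * (Real.exp ε * s ^ ε) := by
            apply mul_le_mul_of_nonneg_left hratio (Real.rpow_nonneg hs0.le α)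
      _ = Real.exp ε * s ^ (α + ε) := by
            rw [Real.rpow_add hs0]; ring
    · exact (integrableOn_Ioi_rpow_of_lt hαε one_pos).const_mul _
    · rw [ae_restrict_iff' measurableSet_Ioi]
      filter_upwards with s hs
      have hs0 : (0:ℝ) < s := lt_trans one_pos hs
      have h1 : Tendsto (fun x => L (s * x) / L x) atTop (nhds 1) := hsv s hs0
      have h2 : Tendsto (fun x => s ^ α * (L (s * x) / L x)) atTop (nhds (s ^ α * 1)) :=
        h1.const_mul _
      rw [mul_one] at h2
      exact h2.congr (fun x => by rw [hF]; simp [mul_comm])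
  have hlimval : (∫ s in Ioi (1:ℝ), s ^ α) = -1 / (α + 1) := by
    rw [integral_Ioi_rpow_of_lt hα one_pos, Real.one_rpow]
  rw [← hlimval]
  apply hDCT.congr'
  filter_upwards [eventually_gt_atTop 0] with x hx0
  have hLx : 0 < L x := hpos x hx0
  have hxα : (0:ℝ) < x ^ α := Real.rpow_pos_of_pos hx0 α
  -- change of variables
  have hcv : (∫ s in Ioi (1:ℝ), (fun t => t ^ α * L t) (x * s))
      = x⁻¹ • ∫ t in Ioi (x * 1), t ^ α * L t :=
    MeasureTheory.integral_comp_mul_left_Ioi (fun t => t ^ α * L t) 1 hx0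
  have hsplit : (∫ s in Ioi (1:ℝ), (fun t => t ^ α * L t) (x * s))
      = x ^ α * ∫ s in Ioi (1:ℝ), s ^ α * L (x * s) := by
    rw [← MeasureTheory.integral_const_mul]
    apply MeasureTheory.setIntegral_congr_fun measurableSet_Ioi
    intro s hs
    have hs0 : (0:ℝ) < s := lt_trans one_pos hs
    simp only
    rw [Real.mul_rpow hx0.le hs0.le]
    ring
  have hFint : (∫ s in Ioi (1:ℝ), F x s) = (∫ s in Ioi (1:ℝ), s ^ α * L (x * s)) / L x := by
    rw [← MeasureTheory.integral_div]
    apply MeasureTheory.setIntegral_congr_fun measurableSet_Ioi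
    intro s _
    rw [hF]
    simp only
    ring
  have hJ : x ^ α * (∫ s in Ioi (1:ℝ), s ^ α * L (x * s))
      = x⁻¹ * ∫ t in Ioi x, t ^ α * L t := by
    rw [← hsplit, hcv, mul_one, smul_eq_mul]
  have hI : (∫ s in Ioi (1:ℝ), s ^ α * L (x * s))
      = (x ^ α)⁻¹ * (x⁻¹ * ∫ t in Ioi x, t ^ α * L t) :=
    (eq_inv_mul_iff_mul_eq₀ hxα.ne').mpr hJ
  rw [hFint, hI, Real.rpow_add_one hx0.ne']
  field_simp
end

section
/- Let L : (0,∞) → (0,∞) satisfy L(t) ≥ c₀ for all t ≥ t₀ (for some c₀ > 0, t₀ > 0). Then for any nonnegative integer y, any α > 0, a > 0, τ > 0, and any fixed constants K₁ > K₀ > max{1, t₀}, one has ∫₀¹ u^{a+α-1} (1-u)^{y-a-1} L((1/τ²)(1/u - 1)) du ≥ (c₀ (K₀^{-a} - K₁^{-a})/a) · (τ²)^{y-a} · (1+K₁τ²)^{-(y+α)}. -/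
open MeasureTheory Real Filter

/-- Lower bound for the normalizing integral of the posterior of κ:
∫₀¹ u^{a+α-1}(1-u)^{y-a-1} L((1/τ²)(1/u-1)) du
  ≥ (c₀(K₀^{-a}-K₁^{-a})/a) (τ²)^{y-a} (1+K₁τ²)^{-(y+α)}. -/
theorem stmt5 (L : ℝ → ℝ) (hmeas : Measurable L) (c₀ t₀ : ℝ) (hc₀ : 0 < c₀)
    (ht₀ : 0 < t₀) (hL : ∀ t ≥ t₀, c₀ ≤ L t)
    (y : ℕ) (α a τ K₀ K₁ : ℝ) (hα : 0 < α) (ha : 0 < a) (hτ : 0 < τ)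
    (hK₀ : max 1 t₀ < K₀) (hK₁ : K₀ < K₁) :
    ENNReal.ofReal (c₀ * (K₀ ^ (-a) - K₁ ^ (-a)) / a * (τ ^ 2) ^ ((y:ℝ) - a) *
        (1 + K₁ * τ ^ 2) ^ (-((y:ℝ) + α))) ≤
    ∫⁻ u in Set.Ioo (0:ℝ) 1,
      ENNReal.ofReal (u ^ (a + α - 1) * (1 - u) ^ ((y:ℝ) - a - 1) *
        L ((1 / τ ^ 2) * (1 / u - 1))) := by
  have hτ2 : (0:ℝ) < τ ^ 2 := by positivity
  have hK₀1 : (1:ℝ) < K₀ := lt_of_le_of_lt (le_max_left 1 t₀) hK₀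
  have hK₀t : t₀ < K₀ := lt_of_le_of_lt (le_max_right 1 t₀) hK₀
  have hK₀0 : (0:ℝ) < K₀ := by linarith
  have hK₁0 : (0:ℝ) < K₁ := by linarith
  have h0 : (0:ℝ) < 1 + K₀ * τ ^ 2 := by positivity
  have h1 : (0:ℝ) < 1 + K₁ * τ ^ 2 := by positivity
  have h01 : 1 + K₀ * τ ^ 2 < 1 + K₁ * τ ^ 2 := by nlinarith
  set u₁ : ℝ := (1 + K₁ * τ ^ 2)⁻¹ with hu₁def
  set u₀ : ℝ := (1 + K₀ * τ ^ 2)⁻¹ with hu₀def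
  have hu₁pos : 0 < u₁ := inv_pos.mpr h1
  have hu₁u₀ : u₁ < u₀ := by
    apply inv_strictAnti₀ h0 h01
  have hu₀lt1 : u₀ < 1 := by
    rw [hu₀def, inv_lt_one_iff₀]
    right; nlinarith
  set C : ℝ := c₀ * ((τ ^ 2) ^ (y:ℝ) * (1 + K₁ * τ ^ 2) ^ (-((y:ℝ) + α))) with hCdef
  have hCpos : 0 < C := by
    apply mul_pos hc₀
    exact mul_pos (Real.rpow_pos_of_pos hτ2 _) (Real.rpow_pos_of_pos h1 _)
  set g₀ : ℝ → ℝ := fun u => u ^ (a - 1) * (1 - u) ^ (-a - 1) with hg₀def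
  -- derivative
  have hF : ∀ u ∈ Set.uIcc u₁ u₀, HasDerivAt (fun v => a⁻¹ * (v * (1 - v)⁻¹) ^ a) (g₀ u) u := by
    intro u hu
    rw [Set.uIcc_of_le hu₁u₀.le] at hu
    have hu0 : 0 < u := lt_of_lt_of_le hu₁pos hu.1
    have h1u : 0 < 1 - u := by
      have := lt_of_le_of_lt hu.2 hu₀lt1; linarith
    have hG : HasDerivAt (fun v : ℝ => v * (1 - v)⁻¹) (((1 - u) ^ 2)⁻¹) u := by
      have h := (hasDerivAt_id u).div ((hasDerivAt_const u (1:ℝ)).sub (hasDerivAt_id u)) h1u.ne'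
      simp only [id_eq] at h
      have e : (1 * (1 - u) - u * (0 - 1)) / (1 - u) ^ 2 = ((1 - u) ^ 2)⁻¹ := by
        field_simp
        ring
      simp only [Pi.sub_apply, id_eq] at h
      rw [e] at h
      have hf : (id / ((fun _ : ℝ => (1:ℝ)) - id) : ℝ → ℝ) = fun v => v * (1 - v)⁻¹ := by
        funext v; simp [div_eq_mul_inv]
      rw [hf] at h; exact h
    have hbase : (0:ℝ) < u * (1 - u)⁻¹ := by positivity
    have hpow := hG.rpow_const (p := a) (Or.inl hbase.ne')
    have hfin := hpow.const_mul a⁻¹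
    have key : a⁻¹ * (((1 - u) ^ 2)⁻¹ * a * (u * (1 - u)⁻¹) ^ (a - 1)) = g₀ u := by
      have e1 : (u * (1 - u)⁻¹) ^ (a - 1) = u ^ (a - 1) * ((1 - u) ^ (a - 1))⁻¹ := by
        rw [Real.mul_rpow hu0.le (by positivity), Real.inv_rpow h1u.le]
      have e2 : (1 - u) ^ (-a - 1) = ((1 - u) ^ (a - 1))⁻¹ * (((1 - u) ^ (2:ℕ) : ℝ))⁻¹ := by
        rw [← Real.rpow_neg h1u.le, ← Real.rpow_natCast (1 - u) 2, ← Real.rpow_neg h1u.le,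
          ← Real.rpow_add h1u]
        norm_num
        ring_nf
      rw [hg₀def]
      simp only []
      rw [e1, e2]
      field_simp
    rw [key] at hfin
    exact hfin
  -- continuity of g₀ on the interval
  have hcont : ContinuousOn g₀ (Set.uIcc u₁ u₀) := by
    rw [Set.uIcc_of_le hu₁u₀.le]
    apply ContinuousOn.mul
    · apply ContinuousOn.rpow_const continuousOn_id
      intro x hx; left
      exact (lt_of_lt_of_le hu₁pos hx.1).ne'
    · apply ContinuousOn.rpow_const (continuousOn_const.sub continuousOn_id)
      intro x hx; left
      have : x < 1 := lt_of_le_of_lt hx.2 hu₀lt1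
      intro hcontra; simp only [Pi.sub_apply, id_eq] at hcontra; linarith
  have hInt : IntervalIntegrable g₀ volume u₁ u₀ := hcont.intervalIntegrable
  have hFTC := intervalIntegral.integral_eq_sub_of_hasDerivAt hF hInt
  -- values of the antiderivative
  have e₀ : u₀ * (1 - u₀)⁻¹ = (K₀ * τ ^ 2)⁻¹ := by
    rw [hu₀def]
    rw [show 1 - (1 + K₀ * τ ^ 2)⁻¹ = (K₀ * τ ^ 2) * (1 + K₀ * τ ^ 2)⁻¹ by
      field_simp; ring]
    field_simp
  have e₁ : u₁ * (1 - u₁)⁻¹ = (K₁ * τ ^ 2)⁻¹ := by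
    rw [hu₁def]
    rw [show 1 - (1 + K₁ * τ ^ 2)⁻¹ = (K₁ * τ ^ 2) * (1 + K₁ * τ ^ 2)⁻¹ by
      field_simp; ring]
    field_simp
  have hval : ∫ u in u₁..u₀, g₀ u =
      a⁻¹ * ((K₀ ^ (-a) - K₁ ^ (-a)) * (τ ^ 2) ^ (-a)) := by
    rw [hFTC, e₀, e₁]
    rw [Real.inv_rpow (by positivity), Real.inv_rpow (by positivity),
      ← Real.rpow_neg (by positivity), ← Real.rpow_neg (by positivity),
      Real.mul_rpow hK₀0.le hτ2.le, Real.mul_rpow hK₁0.le hτ2.le]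
    ring
  -- pointwise lower bound on Ioo u₁ u₀
  have hpt : ∀ u ∈ Set.Ioo u₁ u₀,
      C * g₀ u ≤ u ^ (a + α - 1) * (1 - u) ^ ((y:ℝ) - a - 1) *
        L ((1 / τ ^ 2) * (1 / u - 1)) := by
    intro u hu
    have hu0 : 0 < u := lt_trans hu₁pos hu.1
    have hu1 : u < 1 := lt_trans hu.2 hu₀lt1
    have h1u : 0 < 1 - u := by linarith
    have hinvu : 1 + K₀ * τ ^ 2 < 1 / u := by
      have h := inv_strictAnti₀ hu0 hu.2
      rw [hu₀def, inv_inv] at h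
      rw [one_div]; exact h
    have htK : K₀ < (1 / τ ^ 2) * (1 / u - 1) := by
      have h2 : K₀ * τ ^ 2 < 1 / u - 1 := by linarith
      have h3 : (1 / τ ^ 2) * (K₀ * τ ^ 2) < (1 / τ ^ 2) * (1 / u - 1) :=
        mul_lt_mul_of_pos_left h2 (by positivity)
      have h4 : (1 / τ ^ 2) * (K₀ * τ ^ 2) = K₀ := by field_simp
      linarith
    have hLt : c₀ ≤ L ((1 / τ ^ 2) * (1 / u - 1)) :=
      hL _ (le_of_lt (lt_trans hK₀t htK))
    have hb : τ ^ 2 * (1 + K₁ * τ ^ 2)⁻¹ ≤ 1 - u := by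
      have e : 1 - u₀ = K₀ * τ ^ 2 * (1 + K₀ * τ ^ 2)⁻¹ := by
        rw [hu₀def]; field_simp; ring
      have h5 : τ ^ 2 * (1 + K₁ * τ ^ 2)⁻¹ ≤ K₀ * τ ^ 2 * (1 + K₀ * τ ^ 2)⁻¹ := by
        rw [← div_eq_mul_inv, ← div_eq_mul_inv, div_le_div_iff₀ h1 h0]
        nlinarith
      have h6 : 1 - u₀ ≤ 1 - u := by linarith [hu.2]
      linarith [e ▸ h5]
    have hA : (τ ^ 2) ^ (y:ℝ) * (1 + K₁ * τ ^ 2) ^ (-(y:ℝ)) ≤ (1 - u) ^ (y:ℝ) := by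
      have h7 := Real.rpow_le_rpow (by positivity) hb (Nat.cast_nonneg y)
      rwa [Real.mul_rpow hτ2.le (by positivity), Real.inv_rpow h1.le,
        ← Real.rpow_neg h1.le] at h7
    have hB : (1 + K₁ * τ ^ 2) ^ (-α) ≤ u ^ α := by
      have h8 := Real.rpow_le_rpow hu₁pos.le hu.1.le hα.le
      rwa [hu₁def, Real.inv_rpow h1.le, ← Real.rpow_neg h1.le] at h8
    have eu : u ^ (a + α - 1) = u ^ (a - 1) * u ^ α := by
      rw [show a + α - 1 = (a - 1) + α by ring, Real.rpow_add hu0]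
    have ev : (1 - u) ^ ((y:ℝ) - a - 1) = (1 - u) ^ (-a - 1) * (1 - u) ^ (y:ℝ) := by
      rw [show (y:ℝ) - a - 1 = (-a - 1) + (y:ℝ) by ring, Real.rpow_add h1u]
    have eC : (1 + K₁ * τ ^ 2) ^ (-((y:ℝ) + α)) =
        (1 + K₁ * τ ^ 2) ^ (-(y:ℝ)) * (1 + K₁ * τ ^ 2) ^ (-α) := by
      rw [show -((y:ℝ) + α) = (-(y:ℝ)) + (-α) by ring, Real.rpow_add h1]
    rw [hCdef, eu, ev, eC]
    simp only [hg₀def]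
    have hP : (0:ℝ) ≤ u ^ (a - 1) * (1 - u) ^ (-a - 1) :=
      mul_nonneg (Real.rpow_nonneg hu0.le _) (Real.rpow_nonneg h1u.le _)
    calc c₀ * ((τ ^ 2) ^ (y:ℝ) * ((1 + K₁ * τ ^ 2) ^ (-(y:ℝ)) * (1 + K₁ * τ ^ 2) ^ (-α))) *
          (u ^ (a - 1) * (1 - u) ^ (-a - 1))
        = (c₀ * (((τ ^ 2) ^ (y:ℝ) * (1 + K₁ * τ ^ 2) ^ (-(y:ℝ))) * (1 + K₁ * τ ^ 2) ^ (-α))) *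
          (u ^ (a - 1) * (1 - u) ^ (-a - 1)) := by ring
      _ ≤ (L ((1 / τ ^ 2) * (1 / u - 1)) * ((1 - u) ^ (y:ℝ) * u ^ α)) *
          (u ^ (a - 1) * (1 - u) ^ (-a - 1)) := by
          apply mul_le_mul_of_nonneg_right _ hP
          apply mul_le_mul hLt
            (mul_le_mul hA hB (Real.rpow_nonneg h1.le _) (Real.rpow_nonneg h1u.le _))
            (mul_nonneg (by positivity) (Real.rpow_nonneg h1.le _))
            (le_trans hc₀.le hLt)
      _ = u ^ (a - 1) * u ^ α * ((1 - u) ^ (-a - 1) * (1 - u) ^ (y:ℝ)) *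
          L ((1 / τ ^ 2) * (1 / u - 1)) := by ring
  -- integrability of the lower function on Ioo
  have hIntOn : IntegrableOn (fun u => C * g₀ u) (Set.Ioo u₁ u₀) volume := by
    have h9 : IntegrableOn g₀ (Set.Ioo u₁ u₀) volume :=
      (hInt.1).mono_set Set.Ioo_subset_Ioc_self
    exact h9.const_mul C
  calc ENNReal.ofReal (c₀ * (K₀ ^ (-a) - K₁ ^ (-a)) / a * (τ ^ 2) ^ ((y:ℝ) - a) *
        (1 + K₁ * τ ^ 2) ^ (-((y:ℝ) + α)))
      = ENNReal.ofReal (∫ u in Set.Ioo u₁ u₀, C * g₀ u) := by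
        congr 1
        rw [← MeasureTheory.integral_Ioc_eq_integral_Ioo,
          ← intervalIntegral.integral_of_le hu₁u₀.le,
          intervalIntegral.integral_const_mul, hval, hCdef,
          Real.rpow_sub hτ2, Real.rpow_neg hτ2.le]
        field_simp
    _ = ∫⁻ u in Set.Ioo u₁ u₀, ENNReal.ofReal (C * g₀ u) := by
        apply MeasureTheory.ofReal_integral_eq_lintegral_ofReal hIntOn
        filter_upwards [ae_restrict_mem measurableSet_Ioo] with x hx
        have hx0 : 0 < x := lt_trans hu₁pos hx.1
        have hx1 : 0 < 1 - x := by linarith [lt_trans hx.2 hu₀lt1]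
        simp only [hg₀def, Pi.zero_apply]
        have := mul_nonneg (Real.rpow_nonneg hx0.le (a-1)) (Real.rpow_nonneg hx1.le (-a-1))
        positivity
    _ ≤ ∫⁻ u in Set.Ioo u₁ u₀, ENNReal.ofReal (u ^ (a + α - 1) * (1 - u) ^ ((y:ℝ) - a - 1) *
          L ((1 / τ ^ 2) * (1 / u - 1))) := by
        apply lintegral_mono_ae
        filter_upwards [ae_restrict_mem measurableSet_Ioo] with x hx
        exact ENNReal.ofReal_le_ofReal (hpt x hx)
    _ ≤ ∫⁻ u in Set.Ioo (0:ℝ) 1, ENNReal.ofReal (u ^ (a + α - 1) * (1 - u) ^ ((y:ℝ) - a - 1) *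
          L ((1 / τ ^ 2) * (1 / u - 1))) := by
        apply lintegral_mono_set
        intro x hx
        exact ⟨lt_trans hu₁pos hx.1, lt_trans hx.2 hu₀lt1⟩
end

section
/- Under the posterior density for κ proportional to κ^{a+α-1}(1-κ)^{y-a-1} L((1/τ²)(1/κ−1)) with τ > 0 fixed and sufficiently small: P(κ > η | y, τ) → 0 as y → ∞, for any fixed η ∈ (0,1). -/
open MeasureTheory Real Filter

set_option maxHeartbeats 1600000 in
/-- P(κ > η | y, τ) → 0 as y → ∞, for fixed η ∈ (0,1) and any sufficiently small τ > 0. -/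
theorem stmt10 (L : ℝ → ℝ) (hmeas : Measurable L) (c₀ t₀ : ℝ)
    (hc₀ : 0 < c₀) (ht₀ : 0 < t₀) (hLlow : ∀ t ≥ t₀, c₀ ≤ L t)
    (hKfin : IntegrableOn (fun t => t ^ (-(1:ℝ) - 1) * L t) (Set.Ioi (0:ℝ)))
    (a α : ℝ) (ha : 0 < a) (hα : 0 < α)
    (hint : IntegrableOn (fun t => t ^ (-a - 1) * L t) (Set.Ioi (0:ℝ)))
    (η : ℝ) (hη : η ∈ Set.Ioo (0:ℝ) 1)
    (τ : ℝ) (hτ : 0 < τ)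
    (hτsmall : ∃ δ₁ ∈ Set.Ioo (0:ℝ) 1, t₀ ≤ (1 / τ ^ 2) * (1 / (η * δ₁) - 1)) :
    Filter.Tendsto (fun y : ℕ =>
      (∫ u in Set.Ioo η 1,
          u ^ (a + α - 1) * (1 - u) ^ ((y:ℝ) - a - 1) * L ((1 / τ ^ 2) * (1 / u - 1))) /
        (∫ u in Set.Ioo (0:ℝ) 1,
          u ^ (a + α - 1) * (1 - u) ^ ((y:ℝ) - a - 1) * L ((1 / τ ^ 2) * (1 / u - 1))))
      Filter.atTop (nhds 0) := by
  obtain ⟨δ₁, hδ₁, hτ₀⟩ := hτsmall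
  obtain ⟨hη0, hη1⟩ := hη
  have hτ2 : (0:ℝ) < τ ^ 2 := by positivity
  set β : ℝ := η * δ₁ with hβdef
  have hβ0 : 0 < β := mul_pos hη0 hδ₁.1
  have hβη : β < η := by nlinarith [hδ₁.2]
  have hβ1 : β < 1 := hβη.trans hη1
  set V : ℝ → ℝ := fun u => u ^ (a - 1) * (1 - u) ^ (-a - 1) *
      |L (1 / τ ^ 2 * (1 / u - 1))| with hVdef
  -- positivity of the substituted argument
  have hφpos : ∀ u ∈ Set.Ioo (0:ℝ) 1, 0 < 1 / τ ^ 2 * (1 / u - 1) := by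
    intro u hu
    have h1 : 1 < 1 / u := by rw [lt_div_iff₀ hu.1]; linarith [hu.2]
    have : (0:ℝ) < 1 / τ ^ 2 := by positivity
    nlinarith
  -- argument at least t₀ for u ≤ β
  have hφt₀ : ∀ u : ℝ, 0 < u → u ≤ β → t₀ ≤ 1 / τ ^ 2 * (1 / u - 1) := by
    intro u hu0 hub
    refine hτ₀.trans ?_
    have h1 : 1 / β ≤ 1 / u := one_div_le_one_div_of_le hu0 hub
    have h2 : (0:ℝ) ≤ 1 / τ ^ 2 := by positivity
    nlinarith
  have hVnn : ∀ u : ℝ, u ∈ Set.Ioo (0:ℝ) 1 → 0 ≤ V u := by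
    intro u hu
    have := Real.rpow_nonneg hu.1.le (a - 1)
    have := Real.rpow_nonneg (by linarith [hu.2] : (0:ℝ) ≤ 1 - u) (-a - 1)
    positivity
  -- the dominating function V is integrable on (0,1) (change of variables)
  have hVint : IntegrableOn V (Set.Ioo (0:ℝ) 1) := by
    have hderiv : ∀ u ∈ Set.Ioo (0:ℝ) 1,
        HasDerivWithinAt (fun u : ℝ => 1 / τ ^ 2 * (1 / u - 1))
          (1 / τ ^ 2 * -(u ^ 2)⁻¹) (Set.Ioo 0 1) u := by
      intro u hu
      have h := ((hasDerivAt_inv (ne_of_gt hu.1)).sub_const 1).const_mul (1 / τ ^ 2)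
      have h2 : HasDerivAt (fun u : ℝ => 1 / τ ^ 2 * (1 / u - 1))
          (1 / τ ^ 2 * -(u ^ 2)⁻¹) u := by
        simpa [one_div] using h
      exact h2.hasDerivWithinAt
    have hinj : Set.InjOn (fun u : ℝ => 1 / τ ^ 2 * (1 / u - 1)) (Set.Ioo 0 1) := by
      intro x hx z hz hxz
      simp only at hxz
      have h2 : 1 / x - 1 = 1 / z - 1 := mul_left_cancel₀ (by positivity) hxz
      have h3 : x⁻¹ = z⁻¹ := by rw [one_div, one_div] at h2; linarith
      exact inv_injective h3
    have himg : (fun u : ℝ => 1 / τ ^ 2 * (1 / u - 1)) '' Set.Ioo 0 1 ⊆ Set.Ioi 0 := by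
      rintro t ⟨u, hu, rfl⟩
      exact hφpos u hu
    have hchg := (integrableOn_image_iff_integrableOn_abs_deriv_smul measurableSet_Ioo
        hderiv hinj fun t => t ^ (-a - 1) * L t).mp (hint.mono_set himg)
    have hconst := hchg.abs.const_mul (((τ ^ 2) ^ a)⁻¹)
    refine IntegrableOn.congr_fun hconst ?_ measurableSet_Ioo
    intro u hu
    have hu0 : 0 < u := hu.1
    have h1u : 0 < 1 - u := by linarith [hu.2]
    have hP : 0 < 1 / τ ^ 2 * (1 / u - 1) := hφpos u hu
    have hTa : (0:ℝ) < (τ ^ 2) ^ a := Real.rpow_pos_of_pos hτ2 a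
    have hkey : (1 / τ ^ 2 * (1 / u - 1)) ^ (-a - 1)
        = (1 - u) ^ (-a - 1) * ((τ ^ 2) ^ a * τ ^ 2 * (u ^ (a - 1) * u ^ 2)) := by
      have hPe : 1 / τ ^ 2 * (1 / u - 1) = (1 - u) / (τ ^ 2 * u) := by
        field_simp
      rw [hPe, Real.div_rpow h1u.le (by positivity), Real.mul_rpow hτ2.le hu0.le,
        show (-a - 1 : ℝ) = -(a+1) by ring, Real.rpow_neg hτ2.le, Real.rpow_neg hu0.le]
      have e1 : (τ ^ 2) ^ (a + 1) = (τ ^ 2) ^ a * τ ^ 2 := by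
        rw [Real.rpow_add_one (ne_of_gt hτ2)]
      have e2 : u ^ (a + 1) = u ^ (a - 1) * u ^ 2 := by
        rw [show (a + 1 : ℝ) = (a - 1) + (2:ℕ) by push_cast; ring, Real.rpow_add hu0,
          Real.rpow_natCast]
      have hu1 : u ^ (a - 1) ≠ 0 := ne_of_gt (Real.rpow_pos_of_pos hu0 _)
      rw [e1, e2]
      field_simp
    simp only [smul_eq_mul, hVdef]
    simp only [abs_mul, abs_abs, abs_neg, abs_inv]
    rw [abs_of_pos (show (0:ℝ) < 1 / τ ^ 2 by positivity),
      abs_of_pos (show (0:ℝ) < u ^ 2 by positivity),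
      abs_of_pos (Real.rpow_pos_of_pos hP (-a - 1)), hkey]
    have hune : u ≠ 0 := ne_of_gt hu0
    field_simp
  -- measurability
  have hgm : ∀ y : ℕ, Measurable (fun u : ℝ =>
      u ^ (a + α - 1) * (1 - u) ^ ((y:ℝ) - a - 1) * L (1 / τ ^ 2 * (1 / u - 1))) := by
    intro y; fun_prop
  -- pointwise domination
  have hptw : ∀ (y : ℕ) (u : ℝ), u ∈ Set.Ioo (0:ℝ) 1 →
      |u ^ (a + α - 1) * (1 - u) ^ ((y:ℝ) - a - 1) * L (1 / τ ^ 2 * (1 / u - 1))| ≤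
        (1 - u) ^ (y:ℝ) * V u := by
    intro y u hu
    have hu1 : 0 < u := hu.1
    have h1u : 0 < 1 - u := by linarith [hu.2]
    simp only [hVdef]
    rw [abs_mul, abs_mul, abs_of_pos (Real.rpow_pos_of_pos hu1 _),
      abs_of_pos (Real.rpow_pos_of_pos h1u _)]
    have e2 : (1 - u) ^ ((y:ℝ) - a - 1) = (1 - u) ^ (y:ℝ) * (1 - u) ^ (-a - 1) := by
      rw [← Real.rpow_add h1u]; ring_nf
    rw [e2]
    have e1 : u ^ (a + α - 1) ≤ u ^ (a - 1) :=
      Real.rpow_le_rpow_of_exponent_ge hu1 hu.2.le (by linarith)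
    have h4 : 0 ≤ (1 - u) ^ (-a - 1) := Real.rpow_nonneg h1u.le _
    have h5 : 0 ≤ (1 - u) ^ (y:ℝ) := Real.rpow_nonneg h1u.le _
    calc u ^ (a + α - 1) * ((1 - u) ^ (y:ℝ) * (1 - u) ^ (-a - 1)) *
          |L (1 / τ ^ 2 * (1 / u - 1))|
        = (1 - u) ^ (y:ℝ) * (u ^ (a + α - 1) * (1 - u) ^ (-a - 1) *
            |L (1 / τ ^ 2 * (1 / u - 1))|) := by ring
      _ ≤ (1 - u) ^ (y:ℝ) * (u ^ (a - 1) * (1 - u) ^ (-a - 1) *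
            |L (1 / τ ^ 2 * (1 / u - 1))|) := by
          refine mul_le_mul_of_nonneg_left ?_ h5
          exact mul_le_mul_of_nonneg_right (mul_le_mul_of_nonneg_right e1 h4) (abs_nonneg _)
  -- integrability of the integrand
  have hgint : ∀ y : ℕ, IntegrableOn (fun u : ℝ =>
      u ^ (a + α - 1) * (1 - u) ^ ((y:ℝ) - a - 1) * L (1 / τ ^ 2 * (1 / u - 1)))
      (Set.Ioo (0:ℝ) 1) := by
    intro y
    refine Integrable.mono' hVint ((hgm y).aestronglyMeasurable) ?_
    filter_upwards [ae_restrict_mem measurableSet_Ioo] with u hu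
    rw [Real.norm_eq_abs]
    refine (hptw y u hu).trans ?_
    have h1 : (1 - u) ^ (y:ℝ) ≤ 1 :=
      Real.rpow_le_one (by linarith [hu.2]) (by linarith [hu.1]) (Nat.cast_nonneg y)
    have := hVnn u hu
    nlinarith
  -- numerator-type bound on tail intervals
  have hNbd : ∀ β' : ℝ, 0 < β' → β' < 1 → ∀ y : ℕ,
      |∫ u in Set.Ioo β' 1,
          u ^ (a + α - 1) * (1 - u) ^ ((y:ℝ) - a - 1) * L (1 / τ ^ 2 * (1 / u - 1))| ≤
        (1 - β') ^ (y:ℝ) * ∫ u in Set.Ioo β' 1, V u := by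
    intro β' hb0 hb1 y
    have hsub : Set.Ioo β' 1 ⊆ Set.Ioo (0:ℝ) 1 := Set.Ioo_subset_Ioo hb0.le le_rfl
    have hVi : IntegrableOn (fun u => (1 - β') ^ (y:ℝ) * V u) (Set.Ioo β' 1) :=
      (hVint.mono_set hsub).const_mul _
    calc |∫ u in Set.Ioo β' 1,
          u ^ (a + α - 1) * (1 - u) ^ ((y:ℝ) - a - 1) * L (1 / τ ^ 2 * (1 / u - 1))|
        ≤ ∫ u in Set.Ioo β' 1,
            |u ^ (a + α - 1) * (1 - u) ^ ((y:ℝ) - a - 1) * L (1 / τ ^ 2 * (1 / u - 1))| :=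
          by
            have h := norm_integral_le_integral_norm (μ := volume.restrict (Set.Ioo β' 1))
                (fun u => u ^ (a + α - 1) * (1 - u) ^ ((y:ℝ) - a - 1) *
                  L (1 / τ ^ 2 * (1 / u - 1)))
            simpa only [Real.norm_eq_abs] using h
      _ ≤ ∫ u in Set.Ioo β' 1, (1 - β') ^ (y:ℝ) * V u := by
          refine integral_mono_of_nonneg (Eventually.of_forall fun u => abs_nonneg _) hVi ?_
          filter_upwards [ae_restrict_mem measurableSet_Ioo] with u hu
          refine (hptw y u (hsub hu)).trans ?_
          have h1 : (1 - u) ^ (y:ℝ) ≤ (1 - β') ^ (y:ℝ) :=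
            Real.rpow_le_rpow (by linarith [hu.2]) (by linarith [hu.1]) (Nat.cast_nonneg y)
          exact mul_le_mul_of_nonneg_right h1 (hVnn u (hsub hu))
      _ = (1 - β') ^ (y:ℝ) * ∫ u in Set.Ioo β' 1, V u := integral_const_mul _ _
  -- denominator lower bound
  have hden : ∀ y : ℕ, a + 1 ≤ (y:ℝ) →
      ((β/2) ^ (a+α) * c₀ * (β/4)) * (1 - 3*β/4) ^ ((y:ℝ) - a - 1)
        - (1 - β) ^ (y:ℝ) * (∫ u in Set.Ioo β 1, V u) ≤
      ∫ u in Set.Ioo (0:ℝ) 1,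
          u ^ (a + α - 1) * (1 - u) ^ ((y:ℝ) - a - 1) * L (1 / τ ^ 2 * (1 / u - 1)) := by
    intro y hy
    have hsub1 : Set.Ioc (0:ℝ) β ⊆ Set.Ioo (0:ℝ) 1 := fun u hu => ⟨hu.1, lt_of_le_of_lt hu.2 hβ1⟩
    have hsub2 : Set.Ioo β (1:ℝ) ⊆ Set.Ioo (0:ℝ) 1 := Set.Ioo_subset_Ioo hβ0.le le_rfl
    have int1 := (hgint y).mono_set hsub1
    have int2 := (hgint y).mono_set hsub2
    have hunion : Set.Ioc (0:ℝ) β ∪ Set.Ioo β 1 = Set.Ioo (0:ℝ) 1 :=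
      Set.Ioc_union_Ioo_eq_Ioo hβ0.le hβ1
    have hdisj : Disjoint (Set.Ioc (0:ℝ) β) (Set.Ioo β 1) :=
      Set.Ioc_disjoint_Ioi_same.mono_right Set.Ioo_subset_Ioi_self
    have hsplit : (∫ u in Set.Ioo (0:ℝ) 1,
          u ^ (a + α - 1) * (1 - u) ^ ((y:ℝ) - a - 1) * L (1 / τ ^ 2 * (1 / u - 1)))
        = (∫ u in Set.Ioc (0:ℝ) β,
            u ^ (a + α - 1) * (1 - u) ^ ((y:ℝ) - a - 1) * L (1 / τ ^ 2 * (1 / u - 1)))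
          + ∫ u in Set.Ioo β 1,
              u ^ (a + α - 1) * (1 - u) ^ ((y:ℝ) - a - 1) * L (1 / τ ^ 2 * (1 / u - 1)) := by
      rw [← hunion, setIntegral_union hdisj measurableSet_Ioo int1 int2]
    have hnn : ∀ u ∈ Set.Ioc (0:ℝ) β,
        0 ≤ u ^ (a + α - 1) * (1 - u) ^ ((y:ℝ) - a - 1) * L (1 / τ ^ 2 * (1 / u - 1)) := by
      intro u hu
      have hu1 := hsub1 hu
      have hL : c₀ ≤ L (1 / τ ^ 2 * (1 / u - 1)) := hLlow _ (hφt₀ u hu.1 hu.2)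
      have p1 := Real.rpow_nonneg hu.1.le (a + α - 1)
      have p2 := Real.rpow_nonneg (by linarith [hu1.2] : (0:ℝ) ≤ 1 - u) ((y:ℝ) - a - 1)
      exact mul_nonneg (mul_nonneg p1 p2) (hc₀.le.trans hL)
    have hsubm : Set.Ioo (β/2) (3*β/4) ⊆ Set.Ioc (0:ℝ) β :=
      fun u hu => ⟨by linarith [hu.1], by linarith [hu.2]⟩
    have hmono : (∫ u in Set.Ioo (β/2) (3*β/4),
          u ^ (a + α - 1) * (1 - u) ^ ((y:ℝ) - a - 1) * L (1 / τ ^ 2 * (1 / u - 1)))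
        ≤ ∫ u in Set.Ioc (0:ℝ) β,
            u ^ (a + α - 1) * (1 - u) ^ ((y:ℝ) - a - 1) * L (1 / τ ^ 2 * (1 / u - 1)) := by
      refine setIntegral_mono_set int1 ?_ (HasSubset.Subset.eventuallyLE hsubm)
      filter_upwards [ae_restrict_mem measurableSet_Ioc] with u hu using hnn u hu
    have hconst : ((β/2) ^ (a+α) * (1 - 3*β/4) ^ ((y:ℝ) - a - 1)) * c₀
          * (volume (Set.Ioo (β/2) (3*β/4))).toReal
        ≤ ∫ u in Set.Ioo (β/2) (3*β/4),
            u ^ (a + α - 1) * (1 - u) ^ ((y:ℝ) - a - 1) * L (1 / τ ^ 2 * (1 / u - 1)) := by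
      refine setIntegral_ge_of_const_le_real measurableSet_Ioo measure_Ioo_lt_top.ne ?_
        ((hgint y).mono_set (hsubm.trans hsub1))
      intro u hu
      have hu0 : 0 < u := by linarith [hu.1]
      have hu1 : u < 1 := by linarith [hu.2, hβ1]
      have huβ : u ≤ β := by linarith [hu.2]
      have f1 : (β/2) ^ (a+α) ≤ u ^ (a+α-1) := by
        have g1 : (β/2 : ℝ) ^ (a+α) ≤ u ^ (a+α) :=
          Real.rpow_le_rpow (by linarith) hu.1.le (by linarith)
        have g2 : u ^ (a+α) ≤ u ^ (a+α-1) :=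
          Real.rpow_le_rpow_of_exponent_ge hu0 hu1.le (by linarith)
        linarith
      have f2 : (1 - 3*β/4) ^ ((y:ℝ) - a - 1) ≤ (1-u) ^ ((y:ℝ) - a - 1) :=
        Real.rpow_le_rpow (by linarith [hβ1]) (by linarith [hu.2]) (by linarith)
      have f3 : c₀ ≤ L (1 / τ ^ 2 * (1 / u - 1)) := hLlow _ (hφt₀ u hu0 huβ)
      have p2 : (0:ℝ) ≤ (1 - 3*β/4) ^ ((y:ℝ) - a - 1) :=
        Real.rpow_nonneg (by linarith [hβ1]) _
      have p3 : (0:ℝ) ≤ u ^ (a+α-1) := Real.rpow_nonneg hu0.le _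
      have p4 : (0:ℝ) ≤ (1-u) ^ ((y:ℝ) - a - 1) := Real.rpow_nonneg (by linarith) _
      exact mul_le_mul (mul_le_mul f1 f2 p2 p3) f3 hc₀.le (mul_nonneg p3 p4)
    rw [Real.volume_Ioo, ENNReal.toReal_ofReal (by linarith)] at hconst
    have htail := hNbd β hβ0 hβ1 y
    have hneg := neg_abs_le (∫ u in Set.Ioo β 1,
        u ^ (a + α - 1) * (1 - u) ^ ((y:ℝ) - a - 1) * L (1 / τ ^ 2 * (1 / u - 1)))
    have hring : ((β/2) ^ (a+α) * (1 - 3*β/4) ^ ((y:ℝ) - a - 1)) * c₀ * (3*β/4 - β/2)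
        = ((β/2) ^ (a+α) * c₀ * (β/4)) * (1 - 3*β/4) ^ ((y:ℝ) - a - 1) := by ring
    rw [hsplit]
    linarith
  -- final assembly
  set c₃ : ℝ := (β/2) ^ (a+α) * c₀ * (β/4) with hc₃def
  have hc₃ : 0 < c₃ := by
    have := Real.rpow_pos_of_pos (by linarith : (0:ℝ) < β/2) (a+α)
    positivity
  set ρ : ℝ := 1 - 3*β/4 with hρdef
  have hρ0 : 0 < ρ := by simp only [hρdef]; linarith
  have key : ∀ C x : ℝ, 0 ≤ x → x < ρ →
      Tendsto (fun y : ℕ => (x ^ (y:ℝ) * C) / (c₃/2 * ρ ^ ((y:ℝ) - a - 1)))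
        atTop (nhds 0) := by
    intro C x hx hxρ
    have heq : ∀ y : ℕ, (C / (c₃/2) * ρ ^ (a+1)) * (x/ρ) ^ y
        = (x ^ (y:ℝ) * C) / (c₃/2 * ρ ^ ((y:ℝ) - a - 1)) := by
      intro y
      have hρy : (0:ℝ) < ρ ^ (y:ℝ) := Real.rpow_pos_of_pos hρ0 _
      have hρa : (0:ℝ) < ρ ^ (a+1) := Real.rpow_pos_of_pos hρ0 _
      have e : ρ ^ ((y:ℝ) - a - 1) = ρ ^ (y:ℝ) / ρ ^ (a+1) := by
        rw [← Real.rpow_sub hρ0]; congr 1; ring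
      rw [e, div_pow, ← Real.rpow_natCast x y, ← Real.rpow_natCast ρ y]
      field_simp
    refine Tendsto.congr heq ?_
    have h0 : Tendsto (fun y : ℕ => (x/ρ) ^ y) atTop (nhds 0) :=
      tendsto_pow_atTop_nhds_zero_of_lt_one (div_nonneg hx hρ0.le) ((div_lt_one hρ0).2 hxρ)
    simpa using h0.const_mul (C / (c₃/2) * ρ ^ (a+1))
  have hev1 : ∀ᶠ y : ℕ in atTop, a + 1 ≤ (y:ℝ) :=
    tendsto_natCast_atTop_atTop.eventually_ge_atTop (a+1)
  have hev2 : ∀ᶠ y : ℕ in atTop,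
      ((1-β) ^ (y:ℝ) * (∫ u in Set.Ioo β 1, V u)) / (c₃/2 * ρ ^ ((y:ℝ) - a - 1)) < 1 :=
    (key (∫ u in Set.Ioo β 1, V u) (1-β) (by linarith) (by simp only [hρdef]; linarith)).eventually
      (gt_mem_nhds one_pos)
  have hM1 : 0 ≤ ∫ u in Set.Ioo η 1, V u :=
    setIntegral_nonneg measurableSet_Ioo fun u hu =>
      hVnn u ⟨hη0.trans hu.1, hu.2⟩
  refine squeeze_zero_norm' ?_ (key (∫ u in Set.Ioo η 1, V u) (1-η) (by linarith)
    (by simp only [hρdef]; linarith))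
  filter_upwards [hev1, hev2] with y h1 h2
  have hρy : (0:ℝ) < ρ ^ ((y:ℝ) - a - 1) := Real.rpow_pos_of_pos hρ0 _
  have hd : (0:ℝ) < c₃/2 * ρ ^ ((y:ℝ) - a - 1) := by positivity
  have h2' : (1-β) ^ (y:ℝ) * (∫ u in Set.Ioo β 1, V u) < c₃/2 * ρ ^ ((y:ℝ) - a - 1) :=
    (div_lt_one hd).1 h2
  have hD := hden y h1
  have hsplit : c₃ * ρ ^ ((y:ℝ) - a - 1) =
      c₃/2 * ρ ^ ((y:ℝ) - a - 1) + c₃/2 * ρ ^ ((y:ℝ) - a - 1) := by ring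
  have hDlow : c₃/2 * ρ ^ ((y:ℝ) - a - 1) ≤
      ∫ u in Set.Ioo (0:ℝ) 1,
        u ^ (a + α - 1) * (1 - u) ^ ((y:ℝ) - a - 1) * L (1 / τ ^ 2 * (1 / u - 1)) := by
    linarith
  have hDpos : (0:ℝ) < ∫ u in Set.Ioo (0:ℝ) 1,
      u ^ (a + α - 1) * (1 - u) ^ ((y:ℝ) - a - 1) * L (1 / τ ^ 2 * (1 / u - 1)) :=
    hd.trans_le hDlow
  rw [Real.norm_eq_abs, abs_div, abs_of_pos hDpos]
  exact div_le_div₀ (mul_nonneg (Real.rpow_nonneg (by linarith) _) hM1) (hNbd η hη0 hη1 y) hd hDlow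
end
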